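/- There exists a constant C > 0 such that for every integer p ≥ 2 and every real κ > 0, 0 ≤ f₄(p,κ) − f₂(p,κ)² ≤ C f₂(p,κ)²/p. -/

import Mathlib

open MeasureTheory intervalIntegral

open Set

lemma rpow_half_inv_sqrt {x : ℝ} (h : 0 < x) : x ^ (-(1/2) : ℝ) = 1 / Real.sqrt x := by
  rw [Real.rpow_neg h.le, Real.sqrt_eq_rpow]; norm_num

lemma base_int : IntervalIntegrable (fun u : ℝ => (1 - u^2) ^ (-(1/2) : ℝ)) volume (-1) 1 := by
  have h := intervalIntegrable_deriv_of_nonneg (a := (-1:ℝ)) (b := 1)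
    (g := Real.arcsin) (g' := fun u : ℝ => (1 - u^2) ^ (-(1/2) : ℝ))
    (Real.continuous_arcsin.continuousOn)
    (fun x hx => ?_) (fun x hx => Real.rpow_nonneg ?_ _)
  · exact h
  · simp only [min_eq_left, max_eq_right, (by norm_num : (-1:ℝ) ≤ 1)] at hx
    have h1 : (0:ℝ) < 1 - x^2 := by nlinarith [hx.1, hx.2]
    have := Real.hasDerivAt_arcsin (by linarith [hx.1] : x ≠ -1) (ne_of_lt hx.2)
    convert this using 1
    exact rpow_half_inv_sqrt h1
  · simp only [min_eq_left, max_eq_right, (by norm_num : (-1:ℝ) ≤ 1)] at hx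
    nlinarith [hx.1, hx.2]

lemma gen_int (k : ℕ) (β c : ℝ) (hβ : -(1/2 : ℝ) ≤ β) :
    IntervalIntegrable (fun u : ℝ => u^k * (1-u^2)^β * Real.exp (c*u)) volume (-1) 1 := by
  apply IntervalIntegrable.mono_fun' (g := fun u : ℝ => Real.exp |c| * (1 - u^2) ^ (-(1/2) : ℝ))
  · exact base_int.const_mul _
  · have hres : volume.restrict (Set.uIoc (-1:ℝ) 1) = volume.restrict (Set.Ioo (-1:ℝ) 1) := by
      rw [Set.uIoc_of_le (by norm_num : (-1:ℝ) ≤ 1)]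
      exact (Measure.restrict_congr_set Ioo_ae_eq_Ioc).symm
    rw [hres]
    apply ContinuousOn.aestronglyMeasurable _ measurableSet_Ioo
    apply ContinuousOn.mul
    apply ContinuousOn.mul
    · exact (continuous_pow k).continuousOn
    · apply ContinuousOn.rpow_const
      · exact (continuous_const.sub (continuous_pow 2)).continuousOn
      · intro x hx
        left
        have : (0:ℝ) < 1 - x^2 := by nlinarith [hx.1, hx.2]
        exact this.ne'
    · exact (Real.continuous_exp.comp (continuous_const.mul continuous_id)).continuousOn
  · have hmeas : MeasurableSet (Set.uIoc (-1:ℝ) 1) := measurableSet_uIoc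
    rw [Filter.EventuallyLE, ae_restrict_iff' hmeas]
    have hne : ∀ᵐ u : ℝ ∂volume, u ≠ 1 := by
      have h1 : volume ({1} : Set ℝ) = 0 := Real.volume_singleton
      rw [MeasureTheory.ae_iff]
      simpa [Set.setOf_eq_eq_singleton] using h1
    filter_upwards [hne] with u hu hmem
    rw [Set.uIoc_of_le (by norm_num : (-1:ℝ) ≤ 1)] at hmem
    have hu1 : -1 < u := hmem.1
    have hu2 : u < 1 := lt_of_le_of_ne hmem.2 hu
    have hx : (0:ℝ) < 1 - u^2 := by nlinarith
    have h1 : |u| ≤ 1 := by rw [abs_le]; constructor <;> linarith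
    simp only [norm_mul, Real.norm_eq_abs]
    have e1 : |u ^ k| ≤ 1 := by
      rw [abs_pow]; exact pow_le_one₀ (abs_nonneg u) h1
    have e2 : |(1-u^2)^β| ≤ (1-u^2) ^ (-(1/2) : ℝ) := by
      rw [abs_of_nonneg (Real.rpow_nonneg hx.le _)]
      exact Real.rpow_le_rpow_of_exponent_ge hx (by nlinarith) hβ
    have e3 : |Real.exp (c*u)| ≤ Real.exp |c| := by
      rw [abs_of_pos (Real.exp_pos _)]
      apply Real.exp_le_exp.mpr
      calc c * u ≤ |c * u| := le_abs_self _
        _ = |c| * |u| := abs_mul c u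
        _ ≤ |c| * 1 := by nlinarith [abs_nonneg c]
        _ = |c| := mul_one _
    calc |u^k| * |(1-u^2)^β| * |Real.exp (c*u)|
        ≤ 1 * ((1-u^2) ^ (-(1/2):ℝ)) * Real.exp |c| := by
          apply mul_le_mul (mul_le_mul e1 e2 (abs_nonneg _) (by norm_num)) e3 (abs_nonneg _)
          positivity
      _ = Real.exp |c| * (1-u^2) ^ (-(1/2):ℝ) := by ring

lemma gen_int' (β c : ℝ) (hβ : -(1/2 : ℝ) ≤ β) :
    IntervalIntegrable (fun u : ℝ => (1-u^2)^β * Real.exp (c*u)) volume (-1) 1 := by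
  have := gen_int 0 β c hβ
  simpa using this

lemma stein (γ κ : ℝ) (hγ : (1/2:ℝ) ≤ γ) :
    κ * ∫ u in (-1:ℝ)..1, (1-u^2)^γ * Real.exp (κ*u)
      = (2*γ) * ∫ u in (-1:ℝ)..1, u * (1-u^2)^(γ-1) * Real.exp (κ*u) := by
  have hγ0 : (0:ℝ) < γ := by linarith
  set F : ℝ → ℝ := fun u => (1-u^2)^γ * Real.exp (κ*u) with hF
  set F' : ℝ → ℝ := fun u =>
    κ * ((1-u^2)^γ * Real.exp (κ*u)) - (2*γ) * (u * (1-u^2)^(γ-1) * Real.exp (κ*u)) with hF'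
  have hcont : ContinuousOn F (Icc (-1:ℝ) 1) := by
    apply ContinuousOn.mul
    · apply ContinuousOn.rpow_const
      · exact (continuous_const.sub (continuous_pow 2)).continuousOn
      · exact fun x _ => Or.inr hγ0.le
    · exact (Real.continuous_exp.comp (continuous_const.mul continuous_id)).continuousOn
  have hderiv : ∀ x ∈ Ioo (-1:ℝ) 1, HasDerivAt F (F' x) x := by
    intro x hx
    have hpos : (0:ℝ) < 1 - x^2 := by nlinarith [hx.1, hx.2]
    have h1 : HasDerivAt (fun u : ℝ => 1 - u^2) (-(2*x^1)) x := by
      simpa using (hasDerivAt_pow 2 x).const_sub 1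
    have h2 : HasDerivAt (fun u : ℝ => (1-u^2)^γ)
        (-(2*x^1) * γ * (1-x^2)^(γ-1)) x :=
      h1.rpow_const (Or.inl hpos.ne')
    have h3 : HasDerivAt (fun u : ℝ => Real.exp (κ*u)) (Real.exp (κ*x) * κ) x := by
      have := (Real.hasDerivAt_exp (κ*x)).comp x ((hasDerivAt_id x).const_mul κ)
      exact this.congr_deriv (by simp)
    have := h2.mul h3
    refine this.congr_deriv ?_
    simp only [hF', pow_one]
    ring
  have hFint : IntervalIntegrable F' volume (-1) 1 := by
    have i1 := (gen_int' γ κ (by linarith)).const_mul κ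
    have i2 := (gen_int 1 (γ-1) κ (by linarith)).const_mul (2*γ)
    have := i1.sub i2
    simpa [hF', pow_one] using this
  have hftc := integral_eq_sub_of_hasDerivAt_of_le (by norm_num : (-1:ℝ) ≤ 1) hcont hderiv hFint
  have hend : F 1 - F (-1) = 0 := by
    simp only [hF]
    norm_num
    rw [Real.zero_rpow hγ0.ne']
    ring
  rw [hend] at hftc
  have hsplit : ∫ u in (-1:ℝ)..1, F' u
      = κ * (∫ u in (-1:ℝ)..1, (1-u^2)^γ * Real.exp (κ*u))
        - (2*γ) * ∫ u in (-1:ℝ)..1, u * (1-u^2)^(γ-1) * Real.exp (κ*u) := by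
    rw [intervalIntegral.integral_sub ((gen_int' γ κ (by linarith)).const_mul κ)
      (by simpa [pow_one] using (gen_int 1 (γ-1) κ (by linarith)).const_mul (2*γ)),
      intervalIntegral.integral_const_mul, intervalIntegral.integral_const_mul]
  rw [hsplit] at hftc
  linarith

lemma cube_integrable (β c a₀ a₁ a₂ a₃ : ℝ) (hβ : -(1/2 : ℝ) ≤ β) :
    IntervalIntegrable
      (fun v : ℝ => (a₀ + a₁*v + a₂*v^2 + a₃*v^3) * ((1-v^2)^β * Real.exp (c*v)))
      volume (-1) 1 := by
  have hsum : (fun v : ℝ => (a₀ + a₁*v + a₂*v^2 + a₃*v^3) * ((1-v^2)^β * Real.exp (c*v)))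
      = fun v : ℝ => a₀ * (v^0 * (1-v^2)^β * Real.exp (c*v))
        + a₁ * (v^1 * (1-v^2)^β * Real.exp (c*v))
        + a₂ * (v^2 * (1-v^2)^β * Real.exp (c*v))
        + a₃ * (v^3 * (1-v^2)^β * Real.exp (c*v)) := by
    funext v; ring
  rw [hsum]
  exact ((((gen_int 0 β c hβ).const_mul a₀).add ((gen_int 1 β c hβ).const_mul a₁)).add
    ((gen_int 2 β c hβ).const_mul a₂)).add ((gen_int 3 β c hβ).const_mul a₃)

lemma cube_eval (β c a₀ a₁ a₂ a₃ : ℝ) (hβ : -(1/2 : ℝ) ≤ β) :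
    ∫ v in (-1:ℝ)..1, (a₀ + a₁*v + a₂*v^2 + a₃*v^3) * ((1-v^2)^β * Real.exp (c*v))
      = a₀ * (∫ v in (-1:ℝ)..1, v^0 * (1-v^2)^β * Real.exp (c*v))
        + a₁ * (∫ v in (-1:ℝ)..1, v^1 * (1-v^2)^β * Real.exp (c*v))
        + a₂ * (∫ v in (-1:ℝ)..1, v^2 * (1-v^2)^β * Real.exp (c*v))
        + a₃ * (∫ v in (-1:ℝ)..1, v^3 * (1-v^2)^β * Real.exp (c*v)) := by
  have hsum : (fun v : ℝ => (a₀ + a₁*v + a₂*v^2 + a₃*v^3) * ((1-v^2)^β * Real.exp (c*v)))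
      = fun v : ℝ => a₀ * (v^0 * (1-v^2)^β * Real.exp (c*v))
        + a₁ * (v^1 * (1-v^2)^β * Real.exp (c*v))
        + a₂ * (v^2 * (1-v^2)^β * Real.exp (c*v))
        + a₃ * (v^3 * (1-v^2)^β * Real.exp (c*v)) := by
    funext v; ring
  rw [hsum, intervalIntegral.integral_add, intervalIntegral.integral_add,
    intervalIntegral.integral_add, intervalIntegral.integral_const_mul,
    intervalIntegral.integral_const_mul, intervalIntegral.integral_const_mul,
    intervalIntegral.integral_const_mul]
  · exact (gen_int 0 β c hβ).const_mul a₀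
  · exact (gen_int 1 β c hβ).const_mul a₁
  · exact ((gen_int 0 β c hβ).const_mul a₀).add ((gen_int 1 β c hβ).const_mul a₁)
  · exact (gen_int 2 β c hβ).const_mul a₂
  · exact (((gen_int 0 β c hβ).const_mul a₀).add ((gen_int 1 β c hβ).const_mul a₁)).add
      ((gen_int 2 β c hβ).const_mul a₂)
  · exact (gen_int 3 β c hβ).const_mul a₃

noncomputable def Mk (α c : ℝ) (k : ℕ) : ℝ :=
  ∫ v in (-1:ℝ)..1, v^k * (1-v^2)^α * Real.exp (c*v)

lemma Mk_neg (α κ : ℝ) (k : ℕ) : Mk α (-κ) k = (-1:ℝ)^k * Mk α κ k := by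
  have h := intervalIntegral.integral_comp_neg (a := (-1:ℝ)) (b := 1)
    (f := fun v : ℝ => v^k * (1-v^2)^α * Real.exp (κ*v))
  simp only [neg_neg] at h
  have h2 : (∫ x in (-1:ℝ)..1, (-x)^k * (1-(-x)^2)^α * Real.exp (κ*(-x)))
      = ∫ x in (-1:ℝ)..1, (-1:ℝ)^k * (x^k * (1-x^2)^α * Real.exp ((-κ)*x)) := by
    apply intervalIntegral.integral_congr
    intro x _
    rw [neg_pow]
    ring_nf
  rw [h2, intervalIntegral.integral_const_mul] at h
  unfold Mk
  rw [← h, ← mul_assoc, ← mul_pow]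
  norm_num

lemma key_ineq (α κ : ℝ) (hα : -(1/2:ℝ) ≤ α) (hκ : 0 ≤ κ) :
    Mk α κ 1 * Mk α κ 2 ≤ Mk α κ 0 * Mk α κ 3 := by
  set Φp : ℝ → ℝ → ℝ := fun u v =>
    (u^3*((1-u^2)^α * Real.exp (κ*u)) + (-(u^2)*((1-u^2)^α * Real.exp (κ*u)))*v
      + (-u*((1-u^2)^α * Real.exp (κ*u)))*v^2 + ((1-u^2)^α * Real.exp (κ*u))*v^3)
      * ((1-v^2)^α * Real.exp (κ*v)) with hΦp
  set Φm : ℝ → ℝ → ℝ := fun u v =>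
    (u^3*((1-u^2)^α * Real.exp ((-κ)*u)) + (-(u^2)*((1-u^2)^α * Real.exp ((-κ)*u)))*v
      + (-u*((1-u^2)^α * Real.exp ((-κ)*u)))*v^2 + ((1-u^2)^α * Real.exp ((-κ)*u))*v^3)
      * ((1-v^2)^α * Real.exp ((-κ)*v)) with hΦm
  set G : ℝ → ℝ := fun u =>
    (Mk α κ 3 + (-(Mk α κ 2))*u + (-(Mk α κ 1))*u^2 + (Mk α κ 0)*u^3)
      * ((1-u^2)^α * Real.exp (κ*u))
    - (Mk α (-κ) 3 + (-(Mk α (-κ) 2))*u + (-(Mk α (-κ) 1))*u^2 + (Mk α (-κ) 0)*u^3)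
      * ((1-u^2)^α * Real.exp ((-κ)*u)) with hG
  have hinner : ∀ u : ℝ, (∫ v in (-1:ℝ)..1, (Φp u v - Φm u v)) = G u := by
    intro u
    rw [hΦp, hΦm, intervalIntegral.integral_sub (cube_integrable α κ _ _ _ _ hα)
      (cube_integrable α (-κ) _ _ _ _ hα), cube_eval α κ _ _ _ _ hα,
      cube_eval α (-κ) _ _ _ _ hα, hG]
    simp only [Mk]
    ring
  have houter : (∫ u in (-1:ℝ)..1, G u)
      = (Mk α κ 3 * Mk α κ 0 + (-(Mk α κ 2))*Mk α κ 1 + (-(Mk α κ 1))*Mk α κ 2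
          + Mk α κ 0 * Mk α κ 3)
        - (Mk α (-κ) 3 * Mk α (-κ) 0 + (-(Mk α (-κ) 2))*Mk α (-κ) 1
          + (-(Mk α (-κ) 1))*Mk α (-κ) 2 + Mk α (-κ) 0 * Mk α (-κ) 3) := by
    rw [hG, intervalIntegral.integral_sub (cube_integrable α κ _ _ _ _ hα)
      (cube_integrable α (-κ) _ _ _ _ hα), cube_eval α κ _ _ _ _ hα,
      cube_eval α (-κ) _ _ _ _ hα]
    simp only [Mk]
  have hnonneg : 0 ≤ ∫ u in (-1:ℝ)..1, G u := by
    apply intervalIntegral.integral_nonneg (by norm_num : (-1:ℝ) ≤ 1)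
    intro u hu
    rw [← hinner u]
    apply intervalIntegral.integral_nonneg (by norm_num : (-1:ℝ) ≤ 1)
    intro v hv
    have hqu : (0:ℝ) ≤ (1-u^2)^α := Real.rpow_nonneg (by nlinarith [hu.1, hu.2]) _
    have hqv : (0:ℝ) ≤ (1-v^2)^α := Real.rpow_nonneg (by nlinarith [hv.1, hv.2]) _
    have hE : 0 ≤ (u+v) * (Real.exp (κ*u) * Real.exp (κ*v)
        - Real.exp ((-κ)*u) * Real.exp ((-κ)*v)) := by
      rw [← Real.exp_add, ← Real.exp_add]
      rcases le_total 0 (u+v) with h|h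
      · exact mul_nonneg h (sub_nonneg.mpr (Real.exp_le_exp.mpr (by nlinarith)))
      · have hd : Real.exp (κ*u + κ*v) - Real.exp ((-κ)*u + (-κ)*v) ≤ 0 :=
          sub_nonpos.mpr (Real.exp_le_exp.mpr (by nlinarith))
        nlinarith
    have hfact : Φp u v - Φm u v
        = (u-v)^2 * ((1-u^2)^α * (1-v^2)^α)
          * ((u+v) * (Real.exp (κ*u) * Real.exp (κ*v)
            - Real.exp ((-κ)*u) * Real.exp ((-κ)*v))) := by
      rw [hΦp, hΦm]; ring
    rw [hfact]
    exact mul_nonneg (mul_nonneg (sq_nonneg _) (mul_nonneg hqu hqv)) hE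
  rw [houter] at hnonneg
  have e0 : Mk α (-κ) 0 = Mk α κ 0 := by have := Mk_neg α κ 0; norm_num at this; exact this
  have e1 : Mk α (-κ) 1 = -Mk α κ 1 := by have := Mk_neg α κ 1; norm_num at this; exact this
  have e2 : Mk α (-κ) 2 = Mk α κ 2 := by have := Mk_neg α κ 2; norm_num at this; exact this
  have e3 : Mk α (-κ) 3 = -Mk α κ 3 := by have := Mk_neg α κ 3; norm_num at this; exact this
  rw [e0, e1, e2, e3] at hnonneg
  nlinarith [hnonneg]

lemma rpow_succ {x : ℝ} (hx : 0 ≤ x) {β : ℝ} (hβ : β + 1 ≠ 0) : x^(β+1) = x^β * x := by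
  rcases eq_or_lt_of_le hx with h|h
  · rw [← h, Real.zero_rpow hβ, mul_zero]
  · rw [Real.rpow_add_one h.ne']

/-- `mInt p κ ℓ = ∫_{-1}^1 u^ℓ (1-u²)^{(p-3)/2} exp(κ u) du`. -/
noncomputable def mInt (p : ℕ) (κ : ℝ) (ℓ : ℕ) : ℝ :=
  ∫ u in (-1 : ℝ)..1, u ^ ℓ * (1 - u ^ 2) ^ (((p : ℝ) - 3) / 2) * Real.exp (κ * u)

/-- `e₂(p,κ) = E[U²]` under `FvML_p(θ,κ)`. -/
noncomputable def e2 (p : ℕ) (κ : ℝ) : ℝ := mInt p κ 2 / mInt p κ 0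

/-- `f₂(p,κ) = E[1-U²]` under `FvML_p(θ,κ)`. -/
noncomputable def f2 (p : ℕ) (κ : ℝ) : ℝ := 1 - e2 p κ

/-- `f₄(p,κ) = E[(1-U²)²]` under `FvML_p(θ,κ)`. -/
noncomputable def f4 (p : ℕ) (κ : ℝ) : ℝ :=
  (∫ u in (-1 : ℝ)..1, (1 - u ^ 2) ^ (((p : ℝ) + 1) / 2) * Real.exp (κ * u)) / mInt p κ 0

set_option maxHeartbeats 1000000 in
theorem f4_sub_f2_sq_bound :
    ∃ C : ℝ, 0 < C ∧ ∀ p : ℕ, 2 ≤ p → ∀ κ : ℝ, 0 < κ →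
      0 ≤ f4 p κ - (f2 p κ) ^ 2 ∧
        f4 p κ - (f2 p κ) ^ 2 ≤ C * (f2 p κ) ^ 2 / (p : ℝ) := by
  refine ⟨4, by norm_num, fun p hp κ hκ => ?_⟩
  have hp2 : (2:ℝ) ≤ (p:ℝ) := by exact_mod_cast hp
  obtain ⟨α, hαd⟩ : ∃ α : ℝ, α = ((p:ℝ)-3)/2 := ⟨_, rfl⟩
  have hα : -(1/2:ℝ) ≤ α := by rw [hαd]; linarith
  have hα1 : (0:ℝ) < α + 1 := by linarith
  have hα2 : (0:ℝ) < α + 2 := by linarith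
  set A : ℝ := ∫ u in (-1:ℝ)..1, (1-u^2)^α * Real.exp (κ*u) with hAd
  set B : ℝ := ∫ u in (-1:ℝ)..1, (1-u^2)^(α+1) * Real.exp (κ*u) with hBd
  set Cq : ℝ := ∫ u in (-1:ℝ)..1, (1-u^2)^(α+2) * Real.exp (κ*u) with hCd
  have hposaux : ∀ β : ℝ, -(1/2:ℝ) ≤ β →
      0 < ∫ u in (-1:ℝ)..1, (1-u^2)^β * Real.exp (κ*u) := by
    intro β hβ
    apply intervalIntegral.intervalIntegral_pos_of_pos_on (gen_int' β κ hβ)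
      _ (by norm_num)
    intro x hx
    have : (0:ℝ) < 1 - x^2 := by nlinarith [hx.1, hx.2]
    exact mul_pos (Real.rpow_pos_of_pos this _) (Real.exp_pos _)
  have hA : 0 < A := hposaux α hα
  have hB : 0 < B := hposaux (α+1) (by linarith)
  have hC : 0 < Cq := hposaux (α+2) (by linarith)
  have hIcc : Set.uIcc (-1:ℝ) 1 = Set.Icc (-1:ℝ) 1 := Set.uIcc_of_le (by norm_num)
  have hsq : ∀ x ∈ Set.Icc (-1:ℝ) 1, (0:ℝ) ≤ 1 - x^2 := by
    intro x hx; nlinarith [hx.1, hx.2]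
  have c0 : mInt p κ 0 = A := by
    rw [mInt, hAd, ← hαd]
    apply intervalIntegral.integral_congr
    intro x _; simp
  have cM0 : Mk α κ 0 = A := by
    rw [Mk, hAd]
    apply intervalIntegral.integral_congr
    intro x _; simp
  have c2 : mInt p κ 2 = Mk α κ 2 := by rw [mInt, Mk, ← hαd]
  have cf4 : f4 p κ = Cq / A := by
    rw [f4, c0, hCd]
    congr 1
    apply intervalIntegral.integral_congr
    intro x _
    congr 1
    rw [hαd]; ring
  have hM2 : Mk α κ 2 = A - B := by
    have hcongr : (∫ v in (-1:ℝ)..1, v^2 * (1-v^2)^α * Real.exp (κ*v))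
        = ∫ v in (-1:ℝ)..1,
            ((1-v^2)^α * Real.exp (κ*v) - (1-v^2)^(α+1) * Real.exp (κ*v)) := by
      apply intervalIntegral.integral_congr
      intro x hx
      rw [hIcc] at hx
      have h1 : (1-x^2)^(α+1) = (1-x^2)^α * (1-x^2) := rpow_succ (hsq x hx) hα1.ne'
      simp only [h1]
      ring
    rw [Mk, hcongr, intervalIntegral.integral_sub (gen_int' α κ hα)
      (gen_int' (α+1) κ (by linarith)), ← hAd, ← hBd]
  have hf2 : f2 p κ = B / A := by
    rw [f2, e2, c0, c2, hM2]
    field_simp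
    ring
  -- lower bound: B^2 ≤ Cq * A
  have hCS : B^2 ≤ Cq * A := by
    obtain ⟨c, hc⟩ : ∃ c : ℝ, c = B / A := ⟨_, rfl⟩
    have hcA : c * A = B := by rw [hc]; field_simp
    have hT : 0 ≤ ∫ u in (-1:ℝ)..1,
        (((1-u^2) - c)^2 * ((1-u^2)^α * Real.exp (κ*u))) :=
      intervalIntegral.integral_nonneg (by norm_num)
        (fun x hx => mul_nonneg (sq_nonneg _)
          (mul_nonneg (Real.rpow_nonneg (hsq x hx) _) (Real.exp_pos _).le))
    have hTval : (∫ u in (-1:ℝ)..1, (((1-u^2) - c)^2 * ((1-u^2)^α * Real.exp (κ*u))))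
        = Cq - (2*c) * B + c^2 * A := by
      have hcongr : (∫ u in (-1:ℝ)..1, (((1-u^2) - c)^2 * ((1-u^2)^α * Real.exp (κ*u))))
          = ∫ u in (-1:ℝ)..1,
              ((1-u^2)^(α+2) * Real.exp (κ*u)
                - (2*c) * ((1-u^2)^(α+1) * Real.exp (κ*u))
                + c^2 * ((1-u^2)^α * Real.exp (κ*u))) := by
        apply intervalIntegral.integral_congr
        intro x hx
        rw [hIcc] at hx
        have h1 : (1-x^2)^(α+1) = (1-x^2)^α * (1-x^2) := rpow_succ (hsq x hx) hα1.ne'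
        have h2 : (1-x^2)^(α+2) = (1-x^2)^(α+1) * (1-x^2) := by
          rw [show α+2 = (α+1)+1 by ring]
          exact rpow_succ (hsq x hx) (by linarith)
        simp only [h2, h1]
        ring
      rw [hcongr, intervalIntegral.integral_add, intervalIntegral.integral_sub,
        intervalIntegral.integral_const_mul, intervalIntegral.integral_const_mul,
        ← hCd, ← hBd, ← hAd]
      · exact gen_int' (α+2) κ (by linarith)
      · exact (gen_int' (α+1) κ (by linarith)).const_mul _
      · exact (gen_int' (α+2) κ (by linarith)).sub
          ((gen_int' (α+1) κ (by linarith)).const_mul _)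
      · exact (gen_int' α κ hα).const_mul _
    rw [hTval] at hT
    have hz : 2*c*B*A - c^2*A^2 - B^2 = 0 := by
      calc 2*c*B*A - c^2*A^2 - B^2 = 2*B*(c*A) - (c*A)^2 - B^2 := by ring
        _ = 2*B*B - B^2 - B^2 := by rw [hcA]
        _ = 0 := by ring
    nlinarith [mul_nonneg hT hA.le, hz]
  -- Stein identities
  have hsteinB : κ * B = ((p:ℝ)-1) * Mk α κ 1 := by
    have h := stein (α+1) κ (by linarith)
    have hconv : (∫ u in (-1:ℝ)..1, u * (1-u^2)^(α+1-1) * Real.exp (κ*u)) = Mk α κ 1 := by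
      rw [Mk]
      apply intervalIntegral.integral_congr
      intro x _
      simp only [pow_one, add_sub_cancel_right]
    rw [hconv, ← hBd] at h
    rw [h, hαd]; ring
  have hsteinC : κ * Cq = ((p:ℝ)+1) * (Mk α κ 1 - Mk α κ 3) := by
    have h := stein (α+2) κ (by linarith)
    have hconv : (∫ u in (-1:ℝ)..1, u * (1-u^2)^(α+2-1) * Real.exp (κ*u))
        = Mk α κ 1 - Mk α κ 3 := by
      have hcongr : (∫ u in (-1:ℝ)..1, u * (1-u^2)^(α+2-1) * Real.exp (κ*u))
          = ∫ u in (-1:ℝ)..1,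
              (u^1 * (1-u^2)^α * Real.exp (κ*u) - u^3 * (1-u^2)^α * Real.exp (κ*u)) := by
        apply intervalIntegral.integral_congr
        intro x hx
        rw [hIcc] at hx
        have h1 : (1-x^2)^(α+2-1) = (1-x^2)^α * (1-x^2) := by
          rw [show α+2-1 = α+1 by ring]
          exact rpow_succ (hsq x hx) hα1.ne'
        simp only [h1]; ring
      rw [hcongr, intervalIntegral.integral_sub (gen_int 1 α κ hα) (gen_int 3 α κ hα),
        Mk, Mk]
    rw [hconv, ← hCd] at h
    rw [h, hαd]; ring
  have hkey : Mk α κ 1 * Mk α κ 2 ≤ A * Mk α κ 3 := by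
    have := key_ineq α κ hα hκ.le
    rwa [cM0] at this
  clear_value A B Cq
  clear hAd hBd hCd hposaux c0 c2 cM0 hIcc hsq hαd
  -- combine: Cq * A * (p-1) ≤ (p+1) * B * B
  have hH : Cq * A * ((p:ℝ)-1) ≤ ((p:ℝ)+1) * B * B := by
    set M1 := Mk α κ 1
    set M3 := Mk α κ 3
    have h2 : (M1 - M3)*A ≤ M1*B := by
      have hMB : M1*B = M1*A - M1*(Mk α κ 2) := by rw [hM2]; ring
      rw [hMB]
      ring_nf
      ring_nf at hkey
      linarith [hkey]
    have h3 : κ*(Cq*A*((p:ℝ)-1)) ≤ κ*(((p:ℝ)+1)*B*B) := by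
      calc κ*(Cq*A*((p:ℝ)-1)) = (κ*Cq)*(A*((p:ℝ)-1)) := by ring
        _ = (((p:ℝ)+1)*(M1-M3))*(A*((p:ℝ)-1)) := by rw [hsteinC]
        _ = (((p:ℝ)+1)*((p:ℝ)-1))*((M1-M3)*A) := by ring
        _ ≤ (((p:ℝ)+1)*((p:ℝ)-1))*(M1*B) := by
            apply mul_le_mul_of_nonneg_left h2 (by nlinarith)
        _ = (((p:ℝ)+1)*(((p:ℝ)-1)*M1))*B := by ring
        _ = (((p:ℝ)+1)*(κ*B))*B := by rw [← hsteinB]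
        _ = κ*(((p:ℝ)+1)*B*B) := by ring
    exact le_of_mul_le_mul_left h3 hκ
  -- final
  have hp0 : (0:ℝ) < (p:ℝ) := by linarith
  have hA2 : (0:ℝ) < A^2 := by positivity
  constructor
  · rw [cf4, hf2]
    have e1 : Cq/A - (B/A)^2 = (Cq*A - B^2)/A^2 := by field_simp
    rw [e1]
    apply div_nonneg (by linarith) hA2.le
  · rw [cf4, hf2]
    have e1 : Cq/A - (B/A)^2 = (Cq*A - B^2)/A^2 := by field_simp
    have e2' : 4*(B/A)^2/(p:ℝ) = (4*B^2)/(A^2*(p:ℝ)) := by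
      field_simp
    rw [e1, e2', div_le_div_iff₀ hA2 (by positivity)]
    have hm := mul_le_mul_of_nonneg_left hH hp0.le
    have hmono : (p:ℝ)*(((p:ℝ)+1)*B*B) ≤ ((p:ℝ)-1)*(((p:ℝ)+4)*B^2) := by
      nlinarith [mul_nonneg (by linarith : (0:ℝ) ≤ 2*(p:ℝ)-4) (sq_nonneg B)]
    have hstep : ((p:ℝ)-1)*((p:ℝ)*(Cq*A)) ≤ ((p:ℝ)-1)*(((p:ℝ)+4)*B^2) := by
      calc ((p:ℝ)-1)*((p:ℝ)*(Cq*A)) = (p:ℝ)*(Cq*A*((p:ℝ)-1)) := by ring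
        _ ≤ (p:ℝ)*(((p:ℝ)+1)*B*B) := hm
        _ ≤ ((p:ℝ)-1)*(((p:ℝ)+4)*B^2) := hmono
    have inner : (p:ℝ)*(Cq*A) ≤ ((p:ℝ)+4)*B^2 :=
      le_of_mul_le_mul_left hstep (by linarith)
    nlinarith [mul_le_mul_of_nonneg_left inner (sq_nonneg A)]
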